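/- Completeness of AX for the class M of all causal simulation models: every L-formula that is true in every causal simulation model is a theorem of AX; equivalently, every AX-consistent L-formula is satisfied by some causal simulation model. -/

import Mathlib

set_option maxHeartbeats 1000000

namespace CausalSim

/-! ### Propositional syntax -/

/-- Propositional formulas over atoms `X_i`. -/
inductive PropForm : Type
  | atom : ℕ → PropForm
  | neg : PropForm → PropForm
  | and : PropForm → PropForm → PropForm
  | or : PropForm → PropForm → PropForm
  deriving DecidableEq

def PropForm.imp (φ ψ : PropForm) : PropForm := .or (.neg φ) ψ

/-- A fixed propositional contradiction. -/
def PropForm.bot : PropForm := .and (.atom 0) (.neg (.atom 0))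

/-- Its negation, a fixed tautology. -/
def PropForm.top : PropForm := PropForm.neg PropForm.bot

def PropForm.eval (v : ℕ → Bool) : PropForm → Bool
  | .atom i => v i
  | .neg φ => !(φ.eval v)
  | .and φ ψ => φ.eval v && ψ.eval v
  | .or φ ψ => φ.eval v || ψ.eval v

/-- `L_int`: ordered conjunctions of literals over distinct atoms, represented by
the list of literals `(index, polarity)`, with strictly increasing indices.
The empty list represents the empty intervention `⊤`. -/
abbrev Lint : Type := {l : List (ℕ × Bool) // l.Chain' fun p q => p.1 < q.1}

instance : DecidableEq Lint := fun a b =>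
  decidable_of_iff (a.1 = b.1) Subtype.ext_iff.symm

def Lint.top : Lint := ⟨[], List.isChain_nil⟩

/-- The partial assignment (intervention) specified by `α ∈ L_int`. -/
def Lint.itv (α : Lint) : ℕ → Option Bool :=
  fun i => (α.1.find? fun p => p.1 == i).map Prod.snd

def PropForm.lit (p : ℕ × Bool) : PropForm :=
  if p.2 then .atom p.1 else .neg (.atom p.1)

/-- `α ∈ L_int` regarded as a propositional formula (conjunction of its literals;
`⊤` for the empty intervention). -/
def Lint.toProp (α : Lint) : PropForm :=
  match α.1 with
  | [] => PropForm.top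
  | p :: rest => rest.foldl (fun acc q => .and acc (.lit q)) (.lit p)

/-! ### The language `L` -/

/-- The causal simulation language `L`: propositional formulas over the atoms
`X ∪ L_cond`, where a conditional `[α]β` has antecedent `α ∈ L_int` and
consequent `β ∈ L_prop`. -/
inductive LForm : Type
  | atom : ℕ → LForm
  | cond : Lint → PropForm → LForm
  | neg : LForm → LForm
  | and : LForm → LForm → LForm
  | or : LForm → LForm → LForm

def LForm.imp (φ ψ : LForm) : LForm := .or (.neg φ) ψ

def LForm.iff (φ ψ : LForm) : LForm := .and (φ.imp ψ) (ψ.imp φ)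

/-- `⟨α⟩β`, an abbreviation for `¬[α]¬β`. -/
def LForm.dia (α : Lint) (β : PropForm) : LForm := .neg (.cond α (.neg β))

/-- The embedding of `L_prop` into `L`. -/
def PropForm.toL : PropForm → LForm
  | .atom i => .atom i
  | .neg φ => .neg φ.toL
  | .and φ ψ => .and φ.toL ψ.toL
  | .or φ ψ => .or φ.toL ψ.toL

/-- Evaluation of an `L`-formula treating the elements of `X ∪ L_cond` as
propositional atoms: `v` assigns values to the `X`-atoms and `w` to the
conditional atoms. -/
def LForm.evalA (v : ℕ → Bool) (w : Lint → PropForm → Bool) : LForm → Bool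
  | .atom i => v i
  | .cond α β => w α β
  | .neg φ => !(φ.evalA v w)
  | .and φ ψ => φ.evalA v w && ψ.evalA v w
  | .or φ ψ => φ.evalA v w || ψ.evalA v w

/-- Substitution instances of propositional tautologies over the atoms `X ∪ L_cond`. -/
def Tautology (φ : LForm) : Prop := ∀ v w, φ.evalA v w = true

/-! ### Turing machines over a Boolean variable tape, and interventions -/

/-- A transition rule `((q, read), (q', write, moveRight))`. -/
abbrev Rule : Type := (ℕ × Bool) × (ℕ × Bool × Bool)

/-- A (possibly non-deterministic) Turing machine, given by its finite list of
transition rules; the initial control state is `0`, and the machine halts in a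
configuration to which no rule applies. -/
abbrev Machine : Type := List Rule

/-- A configuration: control state, head position, and tape contents. -/
structure Cfg where
  q : ℕ
  pos : ℕ
  tape : ℕ → Bool

/-- The initial tape: the intervention `itv` first sets the intervened variables. -/
def initTape (itv : ℕ → Option Bool) (x : ℕ → Bool) : ℕ → Bool :=
  fun i => (itv i).getD (x i)

/-- Writing under an intervention: writes to intervened variables are ignored. -/
def writeTape (itv : ℕ → Option Bool) (t : ℕ → Bool) (pos : ℕ) (b : Bool) : ℕ → Bool :=
  if itv pos = none then Function.update t pos b else t

def movePos (p : ℕ) (right : Bool) : ℕ := if right then p + 1 else p - 1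

/-- One step of the intervened machine `I_itv(T)`. -/
def MStep (T : Machine) (itv : ℕ → Option Bool) (c c' : Cfg) : Prop :=
  ∃ r ∈ T, r.1 = (c.q, c.tape c.pos) ∧
    c' = ⟨r.2.1, movePos c.pos r.2.2.2, writeTape itv c.tape c.pos r.2.2.1⟩

/-- A halted configuration: no rule applies. -/
def Halted (T : Machine) (c : Cfg) : Prop := ∀ r ∈ T, r.1 ≠ (c.q, c.tape c.pos)

/-- The set of result tapes of halting executions of `I_itv(T)` on input `x`. -/
def Outputs (T : Machine) (itv : ℕ → Option Bool) (x : ℕ → Bool) : Set (ℕ → Bool) :=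
  {y | ∃ c : Cfg, Relation.ReflTransGen (MStep T itv) ⟨0, 0, initTape itv x⟩ c ∧
        Halted T c ∧ c.tape = y}

/-- Deterministic machines: at most one rule per (state, read symbol). -/
def Machine.Det (T : Machine) : Prop := ∀ r₁ ∈ T, ∀ r₂ ∈ T, r₁.1 = r₂.1 → r₁ = r₂

/-- State descriptions have finite support. -/
def FinSupp (x : ℕ → Bool) : Prop := {i | x i = true}.Finite

/-- Machines with at least one halting execution on every input tape under
every intervention. -/
def Machine.TotalHalting (T : Machine) : Prop :=
  ∀ (α : Lint) (x : ℕ → Bool), FinSupp x → (Outputs T α.itv x).Nonempty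

/-- Finite state machines: over all inputs and interventions, the machine reads and
writes only boundedly many tape variables. -/
def Machine.FiniteState (T : Machine) : Prop :=
  ∃ B : ℕ, ∀ (α : Lint) (x : ℕ → Bool), FinSupp x →
    ∀ c : Cfg, Relation.ReflTransGen (MStep T α.itv) ⟨0, 0, initTape α.itv x⟩ c → c.pos < B

/-! ### Causal simulation models and satisfaction -/

/-- A causal simulation model: a machine together with a state description with
finite support. -/
structure CSM where
  T : Machine
  x : ℕ → Bool
  fin : FinSupp x

/-- Satisfaction, generically in the map sending each intervention `α ∈ L_int`
to the set of output tapes of the corresponding halting executions. -/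
def SatGen (O : Lint → Set (ℕ → Bool)) (x : ℕ → Bool) : LForm → Prop
  | .atom i => x i = true
  | .cond α β => ∀ y ∈ O α, β.eval y = true
  | .neg φ => ¬ SatGen O x φ
  | .and φ ψ => SatGen O x φ ∧ SatGen O x ψ
  | .or φ ψ => SatGen O x φ ∨ SatGen O x ψ

/-- `(T, x) ⊨ φ`. -/
def CSM.Sat (M : CSM) (φ : LForm) : Prop :=
  SatGen (fun α => Outputs M.T α.itv M.x) M.x φ

/-- The class `M` of all causal simulation models. -/
def inM (_ : CSM) : Prop := True

/-- The class `M_det`. -/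
def inMdet (M : CSM) : Prop := M.T.Det

/-- The class `M↓`. -/
def inMhalt (M : CSM) : Prop := M.T.TotalHalting

/-- The class `M↓_det`. -/
def inMdethalt (M : CSM) : Prop := M.T.Det ∧ M.T.TotalHalting

/-! ### The axiomatic systems -/

/-- Derivability from: propositional tautologies (over atoms `X ∪ L_cond`),
the axioms `R` and `K`, extra axioms `extra`, modus ponens, and the rule `RW`. -/
inductive Deriv (extra : LForm → Prop) : LForm → Prop
  | taut {φ} : Tautology φ → Deriv extra φ
  | extra {φ} : extra φ → Deriv extra φ
  | axR (α : Lint) : Deriv extra (.cond α α.toProp)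
  | axK (α : Lint) (β γ : PropForm) :
      Deriv extra ((LForm.cond α (β.imp γ)).imp ((LForm.cond α β).imp (.cond α γ)))
  | mp {φ ψ} : Deriv extra (φ.imp ψ) → Deriv extra φ → Deriv extra ψ
  | rw (α : Lint) {β β' : PropForm} :
      Deriv extra (β.imp β').toL → Deriv extra ((LForm.cond α β).imp (.cond α β'))

/-- Instances of axiom `F : ⟨α⟩β → [α]β`. -/
def axF (φ : LForm) : Prop :=
  ∃ (α : Lint) (β : PropForm), φ = (LForm.dia α β).imp (.cond α β)

/-- Instances of axiom `D : [α]β → ⟨α⟩β`. -/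
def axD (φ : LForm) : Prop :=
  ∃ (α : Lint) (β : PropForm), φ = (LForm.cond α β).imp (LForm.dia α β)

def AX : LForm → Prop := Deriv fun _ => False
def AXdet : LForm → Prop := Deriv axF
def AXhalt : LForm → Prop := Deriv axD
def AXdethalt : LForm → Prop := Deriv fun φ => axF φ ∨ axD φ

end CausalSim
namespace CausalSim

/-! ### Normal form clauses and selection functions -/

def bigAndL : List LForm → LForm
  | [] => PropForm.top.toL
  | φ :: rest => rest.foldl .and φ

def bigOrL : List LForm → LForm
  | [] => PropForm.bot.toL
  | φ :: rest => rest.foldl .or φ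

def bigOrP : List PropForm → PropForm
  | [] => PropForm.bot
  | φ :: rest => rest.foldl .or φ

/-- The data of a conjunctive clause
`π ∧ ⋀_{i∈I}([α_i] ⋁_{j∈J_i} β_{i,j}) ∧ ⋀_{k∈K} ⟨α_k⟩ β_k`. -/
structure Clause where
  pi : PropForm
  boxes : List (Lint × List Lint)
  dias : List (Lint × Lint)

/-- The `α_i` (for distinct `i ∈ I`) are pairwise distinct. -/
def Clause.wf (δ : Clause) : Prop := (δ.boxes.map Prod.fst).Pairwise (· ≠ ·)

def Clause.toLForm (δ : Clause) : LForm :=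
  .and δ.pi.toL (.and
    (bigAndL (δ.boxes.map fun p => .cond p.1 (bigOrP (p.2.map Lint.toProp))))
    (bigAndL (δ.dias.map fun p => LForm.dia p.1 p.2.toProp)))

/-- `S_δ`: the antecedents occurring in the clause `δ`. -/
def Clause.ants (δ : Clause) : List Lint := δ.boxes.map Prod.fst ++ δ.dias.map Prod.fst

/-- A list of literals is propositionally consistent. -/
def LitsConsistent (l : List (ℕ × Bool)) : Prop :=
  ∀ i, ¬((i, true) ∈ l ∧ (i, false) ∈ l)

/-- `γ` is the `L_int`-equivalent of the conjunction of the literals `l`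
(reordering and deletion of repeated literals). -/
def Lint.IsEquivOf (γ : Lint) (l : List (ℕ × Bool)) : Prop := γ.1.toFinset = l.toFinset

/-- `f` is a selection function for the clause `δ`. -/
def IsSelection (δ : Clause) (f : Lint → List Lint) : Prop :=
  (∀ α ∈ δ.ants, α ∉ δ.dias.map Prod.fst → f α = []) ∧
  (∀ α ∈ δ.dias.map Prod.fst, ∃ sel : Lint × Lint → Lint,
    f α = (δ.dias.filter fun p => decide (p.1 = α)).map sel ∧
    ∀ p ∈ δ.dias, p.1 = α →
      (∀ J, (α, J) ∈ δ.boxes →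
        ∃ j ∈ J, LitsConsistent (α.1 ++ p.2.1 ++ j.1) ∧
          (sel p).IsEquivOf (α.1 ++ p.2.1 ++ j.1)) ∧
      (α ∉ δ.boxes.map Prod.fst →
        LitsConsistent (α.1 ++ p.2.1) ∧ (sel p).IsEquivOf (α.1 ++ p.2.1)))

/-! ### Sizes -/

def PropForm.size : PropForm → ℕ
  | .atom i => i + 1
  | .neg φ => φ.size + 1
  | .and φ ψ => φ.size + ψ.size + 1
  | .or φ ψ => φ.size + ψ.size + 1

def Lint.size (α : Lint) : ℕ := (α.1.map fun p => p.1 + 1).sum + 1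

/-- `|φ|`, the number of symbols of `φ` (an occurrence of the atom `X_i`
contributing `i + 1` symbols). -/
def LForm.size : LForm → ℕ
  | .atom i => i + 1
  | .cond α β => α.size + β.size + 1
  | .neg φ => φ.size + 1
  | .and φ ψ => φ.size + ψ.size + 1
  | .or φ ψ => φ.size + ψ.size + 1

def PropForm.maxAtom : PropForm → ℕ
  | .atom i => i
  | .neg φ => φ.maxAtom
  | .and φ ψ => max φ.maxAtom ψ.maxAtom
  | .or φ ψ => max φ.maxAtom ψ.maxAtom

def Lint.maxAtom (α : Lint) : ℕ := (α.1.map Prod.fst).foldr max 0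

/-- `N`: the largest index of an atom occurring in `φ`. -/
def LForm.maxAtom : LForm → ℕ
  | .atom i => i
  | .cond α β => max α.maxAtom β.maxAtom
  | .neg φ => φ.maxAtom
  | .and φ ψ => max φ.maxAtom ψ.maxAtom
  | .or φ ψ => max φ.maxAtom ψ.maxAtom

/-- `S_φ`: the antecedents of the conditionals occurring in `φ`. -/
def LForm.ants : LForm → List Lint
  | .atom _ => []
  | .cond α _ => [α]
  | .neg φ => φ.ants
  | .and φ ψ => φ.ants ++ ψ.ants
  | .or φ ψ => φ.ants ++ ψ.ants

/-! ### The programming language `PL` -/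

/-- Assignment statements `X_i := c`, `X_i := X_j`, `X_i := !X_j`. -/
inductive BAssign : Type
  | const (i : ℕ) (c : Bool)
  | copy (i j : ℕ)
  | negcopy (i j : ℕ)
  deriving DecidableEq

def BAssign.target : BAssign → ℕ
  | .const i _ => i
  | .copy i _ => i
  | .negcopy i _ => i

def BAssign.maxVar : BAssign → ℕ
  | .const i _ => i
  | .copy i j => max i j
  | .negcopy i j => max i j

/-- Tests `X_i = c`, `X_i = X_j`, `X_i != X_j`, and conjunctions thereof. -/
inductive BTest : Type
  | eqc (i : ℕ) (c : Bool)
  | eqv (i j : ℕ)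
  | nev (i j : ℕ)
  | and (t₁ t₂ : BTest)
  deriving DecidableEq

def BTest.eval (s : ℕ → Bool) : BTest → Bool
  | .eqc i c => s i == c
  | .eqv i j => s i == s j
  | .nev i j => !(s i == s j)
  | .and t₁ t₂ => t₁.eval s && t₂.eval s

def BTest.size : BTest → ℕ
  | .eqc _ _ => 1
  | .eqv _ _ => 1
  | .nev _ _ => 1
  | .and t₁ t₂ => t₁.size + t₂.size + 1

/-- Programs of `PL`: the empty program, assignments, sequencing,
if-then-else, nondeterministic choice, and the unconditional infinite loop. -/
inductive Prog : Type
  | empty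
  | assign (a : BAssign)
  | seq (p q : Prog)
  | ite (c : BTest) (p q : Prog)
  | choose (ps : List Prog)
  | loop

mutual
  /-- The length of a program. -/
  def Prog.size : Prog → ℕ
    | .empty => 1
    | .assign _ => 1
    | .seq p q => p.size + q.size + 1
    | .ite c p q => c.size + p.size + q.size + 1
    | .choose ps => Prog.sizeList ps + 1
    | .loop => 1
  def Prog.sizeList : List Prog → ℕ
    | [] => 0
    | p :: ps => p.size + Prog.sizeList ps
end

/-- The effect of an assignment under an intervention: writes to intervened
variables are ignored. -/
def applyAssign (itv : ℕ → Option Bool) (a : BAssign) (s : ℕ → Bool) : ℕ → Bool :=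
  let v : Bool := match a with
    | .const _ c => c
    | .copy _ j => s j
    | .negcopy _ j => !(s j)
  if itv a.target = none then Function.update s a.target v else s

/-- Big-step semantics of `PL` under an intervention. A `loop`-statement has no
halting execution, and a `choose`-statement executes one of its branches. -/
inductive BigStep (itv : ℕ → Option Bool) : Prog → (ℕ → Bool) → (ℕ → Bool) → Prop
  | empty (s) : BigStep itv .empty s s
  | assign (a s) : BigStep itv (.assign a) s (applyAssign itv a s)
  | seq {p q s t u} : BigStep itv p s t → BigStep itv q t u → BigStep itv (.seq p q) s u
  | iteT {c p q s t} : c.eval s = true → BigStep itv p s t → BigStep itv (.ite c p q) s t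
  | iteF {c p q s t} : c.eval s = false → BigStep itv q s t → BigStep itv (.ite c p q) s t
  | choose {ps p s t} : p ∈ ps → BigStep itv p s t → BigStep itv (.choose ps) s t

/-- The set of result tapes of halting executions of the intervened program. -/
def ProgOutputs (P : Prog) (itv : ℕ → Option Bool) (x : ℕ → Bool) : Set (ℕ → Bool) :=
  {y | BigStep itv P (initTape itv x) y}

/-- Satisfaction `(T_P, x) ⊨ φ` for the machine compiled from the program `P`
(whose executions are those of `P`). -/
def ProgSat (P : Prog) (x : ℕ → Bool) (φ : LForm) : Prop :=
  SatGen (fun α => ProgOutputs P α.itv x) x φ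

end CausalSim
namespace CausalSim

/-! ### The canonical program fragment `PL†_{φ,C}` -/

def seqList : List Prog → Prog
  | [] => .empty
  | p :: ps => .seq p (seqList ps)

/-- Listing 1: `IsIntervened(X_i)` (with offset parameter `N`): performs the
toggle check for `X_i`, records the result in `X_{i+N}`, uses `X_{i+2N}` as a
temporary variable, and leaves `X_i` unchanged. -/
def isIntervened (N i : ℕ) : Prog :=
  seqList [
    .assign (.copy (i + N) i),
    .assign (.negcopy i i),
    .assign (.copy (i + 2 * N) i),
    .ite (.eqv (i + 2 * N) (i + N))
      (.assign (.const (i + N) true)) (.assign (.const (i + N) false)),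
    .assign (.negcopy i i)]

/-- One copy of `IsIntervened(X_i)` for each `1 ≤ i ≤ N`. -/
def isIntervenedAll (N : ℕ) : Prog :=
  seqList ((List.range' 1 N).map (isIntervened N))

/-- Listing 2: `HoldsFromIntervention(α)`: the condition checking that exactly
the variables occurring in `α` are marked as intervened and carry the values
specified by `α`'s literals. -/
def holdsFromItv (N : ℕ) (α : Lint) : BTest :=
  ((List.range' 1 N).map fun i =>
    match α.itv i with
    | some b => BTest.and (.eqc i b) (.eqc (i + N) true)
    | none => BTest.eqc (i + N) false).foldr .and (.eqv 0 0)

/-- A sequence of assignment statements. -/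
def assignSeq (l : List BAssign) : Prog := seqList (l.map Prog.assign)

/-- An admissible assignment sequence: assignments only to (pairwise distinct)
variables `X_i` with `1 ≤ i ≤ N`, mentioning only variables of index `≤ N`. -/
def GoodAssigns (N : ℕ) (l : List BAssign) : Prop :=
  (l.map BAssign.target).Nodup ∧ ∀ a ∈ l, a.maxVar ≤ N ∧ 1 ≤ a.target

/-- The admissible bodies of the `if`-statements of a fragment program:
(a) a `choose`-statement with at most `C·|φ|` branches, each an admissible
assignment sequence; (b) a single admissible assignment sequence; or
(c) a single `loop`-statement — with (a) excluded for the deterministic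
dialects and (c) excluded for the halting dialects. -/
def IfBody (C N sz : ℕ) (allowChoose allowLoop : Bool) (p : Prog) : Prop :=
  (allowChoose = true ∧ ∃ branches : List (List BAssign),
      p = .choose (branches.map assignSeq) ∧ branches.length ≤ C * sz ∧
      ∀ l ∈ branches, GoodAssigns N l) ∨
  (∃ l : List BAssign, p = assignSeq l ∧ GoodAssigns N l) ∨
  (allowLoop = true ∧ p = .loop)

/-- Membership in the fragment `PL†_{φ,C}`: one copy of `IsIntervened(X_i)` for
each `1 ≤ i ≤ N`, followed by at most one `if`-statement with condition
`HoldsFromIntervention(α)` for each antecedent `α` occurring in `φ`, with an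
admissible body. -/
def InFrag (C : ℕ) (φ : LForm) (allowChoose allowLoop : Bool) (P : Prog) : Prop :=
  ∃ ifs : List (Lint × Prog),
    (ifs.map Prod.fst).Nodup ∧
    (∀ q ∈ ifs, q.1 ∈ φ.ants ∧ IfBody C φ.maxAtom φ.size allowChoose allowLoop q.2) ∧
    P = .seq (isIntervenedAll φ.maxAtom)
      (seqList (ifs.map fun q => Prog.ite (holdsFromItv φ.maxAtom q.1) q.2 .empty))

/-! ### Encodings into binary strings -/

def encNat (n : ℕ) : List Bool := List.replicate n true ++ [false]

def encListGen (enc : α → List Bool) (l : List α) : List Bool :=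
  encNat l.length ++ l.flatMap enc

def encLit (p : ℕ × Bool) : List Bool := encNat p.1 ++ [p.2]

def encLint (α : Lint) : List Bool := encListGen encLit α.1

def encProp : PropForm → List Bool
  | .atom i => encNat 0 ++ encNat i
  | .neg φ => encNat 1 ++ encProp φ
  | .and φ ψ => encNat 2 ++ encProp φ ++ encProp ψ
  | .or φ ψ => encNat 3 ++ encProp φ ++ encProp ψ

/-- A standard encoding of `L`-formulas as binary strings. -/
def encLForm : LForm → List Bool
  | .atom i => encNat 0 ++ encNat i
  | .cond α β => encNat 1 ++ encLint α ++ encProp β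
  | .neg φ => encNat 2 ++ encLForm φ
  | .and φ ψ => encNat 3 ++ encLForm φ ++ encLForm ψ
  | .or φ ψ => encNat 4 ++ encLForm φ ++ encLForm ψ

def encAssign : BAssign → List Bool
  | .const i c => encNat 0 ++ encNat i ++ [c]
  | .copy i j => encNat 1 ++ encNat i ++ encNat j
  | .negcopy i j => encNat 2 ++ encNat i ++ encNat j

def encTest : BTest → List Bool
  | .eqc i c => encNat 0 ++ encNat i ++ [c]
  | .eqv i j => encNat 1 ++ encNat i ++ encNat j
  | .nev i j => encNat 2 ++ encNat i ++ encNat j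
  | .and t₁ t₂ => encNat 3 ++ encTest t₁ ++ encTest t₂

mutual
  /-- A standard encoding of programs as binary strings. -/
  def encProg : Prog → List Bool
    | .empty => encNat 0
    | .assign a => encNat 1 ++ encAssign a
    | .seq p q => encNat 2 ++ encProg p ++ encProg q
    | .ite c p q => encNat 3 ++ encTest c ++ encProg p ++ encProg q
    | .choose ps => encNat 4 ++ encNat ps.length ++ encProgList ps
    | .loop => encNat 5
  def encProgList : List Prog → List Bool
    | [] => []
    | p :: ps => encProg p ++ encProgList ps
end

/-! ### Polynomial time, NP, and NP-completeness -/

/-- The identity finite encoding of binary strings. -/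
def listBoolFinEncoding : Computability.Encoding (List Bool) Bool where
  encode := id
  decode := fun l => some l
  decode_encode := fun _ => rfl

/-- `f` is computable in polynomial time (by a Turing machine). -/
def PolyTimeFun (f : List Bool → List Bool) : Prop :=
  Nonempty (Turing.TM2ComputableInPolyTime listBoolFinEncoding.encode listBoolFinEncoding.encode f)

/-- Polynomial-time many-one reducibility. -/
def PolyReducible (L₁ L₂ : List Bool → Prop) : Prop :=
  ∃ f : List Bool → List Bool, PolyTimeFun f ∧ ∀ s, L₁ s ↔ L₂ (f s)

/-- A self-delimiting pairing of binary strings. -/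
def encPairStr (a b : List Bool) : List Bool := encNat a.length ++ a ++ b

/-- The class NP, via polynomial-time verifiers of polynomial-length certificates. -/
def InNP (L : List Bool → Prop) : Prop :=
  ∃ (V : List Bool → Bool) (p : Polynomial ℕ),
    PolyTimeFun (fun s => [V s]) ∧
    ∀ s, L s ↔ ∃ w : List Bool, w.length ≤ p.eval s.length ∧ V (encPairStr s w) = true

/-- NP-completeness with respect to polynomial-time many-one reductions. -/
def NPComplete (L : List Bool → Prop) : Prop :=
  InNP L ∧ ∀ L' : List Bool → Prop, InNP L' → PolyReducible L' L

/-- The language Sim-Sat for a class of models: encodings of `L`-formulas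
satisfied by some model in the class. -/
def SimSatLang (cls : CSM → Prop) : List Bool → Prop :=
  fun s => ∃ φ : LForm, s = encLForm φ ∧ ∃ M : CSM, cls M ∧ M.Sat φ

/-! ### Miscellaneous helpers -/

/-- The state description with support the list `xs`. -/
def stateOf (xs : List ℕ) : ℕ → Bool := fun i => decide (i ∈ xs)

theorem finSupp_stateOf (xs : List ℕ) : FinSupp (stateOf xs) := by
  apply Set.Finite.subset (List.finite_toSet xs)
  intro i hi
  simpa [stateOf] using hi

/-- The model given by a machine and (the support of) a state description. -/
def csmOf (T : Machine) (xs : List ℕ) : CSM := ⟨T, stateOf xs, finSupp_stateOf xs⟩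

/-- The singleton intervention `X_n := 1`. -/
def lintSingle (n : ℕ) : Lint := ⟨[(n, true)], List.isChain_singleton _⟩

/-- The set `Ω` of the non-compactness proposition, for `f : ℕ → ℕ`. -/
def Omega (f : ℕ → ℕ) : Set LForm :=
  {ψ | ∃ n, ψ = LForm.neg (.atom n)} ∪
  {ψ | ∃ n, ψ = LForm.dia (lintSingle n) (.atom (f n))} ∪
  {ψ | ∃ n m, m ≠ n ∧ m ≠ f n ∧ ψ = LForm.cond (lintSingle n) (.neg (.atom m))}

end CausalSim

namespace CausalSim

/-! ### State encodings -/

def stS (j i : ℕ) : ℕ := 8 * Nat.pair j i + 2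
def stB1 (j i : ℕ) (c : Bool) : ℕ := 8 * Nat.pair j i + 3 + 2 * c.toNat
def stB2 (j i : ℕ) (c : Bool) : ℕ := 8 * Nat.pair j i + 4 + 2 * c.toNat

theorem stS_eq_iff {j i j' i'} : stS j i = stS j' i' ↔ j = j' ∧ i = i' := by
  unfold stS
  constructor
  · intro h
    have : Nat.pair j i = Nat.pair j' i' := by omega
    exact Nat.pair_eq_pair.mp this
  · rintro ⟨rfl, rfl⟩; rfl

theorem stB1_eq_iff {j i c j' i' c'} :
    stB1 j i c = stB1 j' i' c' ↔ j = j' ∧ i = i' ∧ c = c' := by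
  unfold stB1
  constructor
  · intro h
    cases c <;> cases c' <;> simp [Bool.toNat] at h ⊢ <;>
      first
        | (exact Nat.pair_eq_pair.mp (by omega))
        | omega
  · rintro ⟨rfl, rfl, rfl⟩; rfl

theorem stB2_eq_iff {j i c j' i' c'} :
    stB2 j i c = stB2 j' i' c' ↔ j = j' ∧ i = i' ∧ c = c' := by
  unfold stB2
  constructor
  · intro h
    cases c <;> cases c' <;> simp [Bool.toNat] at h ⊢ <;>
      first
        | (exact Nat.pair_eq_pair.mp (by omega))
        | omega
  · rintro ⟨rfl, rfl, rfl⟩; rfl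

theorem stS_ne_zero (j i : ℕ) : stS j i ≠ 0 := by unfold stS; omega
theorem stS_ne_one (j i : ℕ) : stS j i ≠ 1 := by unfold stS; omega
theorem stB1_ne_zero (j i c) : stB1 j i c ≠ 0 := by unfold stB1; cases c <;> simp [Bool.toNat] <;> omega
theorem stB1_ne_one (j i c) : stB1 j i c ≠ 1 := by unfold stB1; cases c <;> simp [Bool.toNat] <;> omega
theorem stB2_ne_zero (j i c) : stB2 j i c ≠ 0 := by unfold stB2; cases c <;> simp [Bool.toNat] <;> omega
theorem stB2_ne_one (j i c) : stB2 j i c ≠ 1 := by unfold stB2; cases c <;> simp [Bool.toNat] <;> omega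
theorem stS_ne_stB1 (j i j' i' c) : stS j i ≠ stB1 j' i' c := by
  unfold stS stB1; cases c <;> simp [Bool.toNat] <;> omega
theorem stS_ne_stB2 (j i j' i' c) : stS j i ≠ stB2 j' i' c := by
  unfold stS stB2; cases c <;> simp [Bool.toNat] <;> omega
theorem stB1_ne_stB2 (j i c j' i' c') : stB1 j i c ≠ stB2 j' i' c' := by
  unfold stB1 stB2; cases c <;> cases c' <;> simp [Bool.toNat] <;> omega

end CausalSim

namespace CausalSim

/-! ### The canonical machine -/

/-- A branch specification: the intervention signature to verify, and the
witness tape to write. -/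
structure Br where
  sig : ℕ → Option Bool
  wit : ℕ → Bool

def defBr : Br := ⟨fun _ => none, fun _ => false⟩

/-- The rules of branch `j` at tape position `i`. -/
def posRules (j : ℕ) (b : Br) (i : ℕ) : Machine :=
  (match b.sig i with
  | some a =>
    [((stS j i, a), (stB1 j i a, !a, true)),
     ((stS j i, !a), (1, !a, true)),
     ((stB2 j i a, a), (stS j (i+1), a, true)),
     ((stB2 j i a, !a), (1, !a, true))]
  | none =>
    [((stS j i, true), (stB1 j i true, false, true)),
     ((stS j i, false), (stB1 j i false, true, true)),
     ((stB2 j i true, false), (stS j (i+1), b.wit i, true)),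
     ((stB2 j i true, true), (1, true, true)),
     ((stB2 j i false, true), (stS j (i+1), b.wit i, true)),
     ((stB2 j i false, false), (1, false, true))])
  ++ [((stB1 j i true, true), (stB2 j i true, true, false)),
      ((stB1 j i true, false), (stB2 j i true, false, false)),
      ((stB1 j i false, true), (stB2 j i false, true, false)),
      ((stB1 j i false, false), (stB2 j i false, false, false))]

def branchRules (N j : ℕ) (b : Br) : Machine :=
  [((0, true), (stS j 0, true, false)), ((0, false), (stS j 0, false, false))]
  ++ (List.range (N+1)).flatMap (posRules j b)

def machineOf (N : ℕ) (bs : List Br) : Machine :=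
  [((0, true), (1, true, true)), ((0, false), (1, false, true)),
   ((1, true), (1, true, true)), ((1, false), (1, false, true))]
  ++ (List.range bs.length).flatMap (fun j => branchRules N j (bs.getD j defBr))

/-- Branch `b` matches the intervention `itv` up to `N`. -/
def MatchB (N : ℕ) (itv : ℕ → Option Bool) (b : Br) : Prop := ∀ i ≤ N, b.sig i = itv i

/-- The output tape of a successful run of branch `b`. -/
def finalT (N : ℕ) (itv : ℕ → Option Bool) (x : ℕ → Bool) (b : Br) : ℕ → Bool :=
  fun m => (itv m).getD (if m ≤ N then b.wit m else x m)

/-- The tape after the first `i` positions have been processed by branch `b`. -/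
def tpj (itv : ℕ → Option Bool) (x : ℕ → Bool) (b : Br) (i : ℕ) : ℕ → Bool :=
  fun m => if m < i ∧ itv m = none then b.wit m else initTape itv x m

theorem tpj_zero (itv x b) : tpj itv x b 0 = initTape itv x := by
  funext m; simp [tpj]

theorem tpj_succ_some {itv : ℕ → Option Bool} {i a} (x b) (h : itv i = some a) :
    tpj itv x b (i+1) = tpj itv x b i := by
  funext m
  by_cases hm : m = i
  · subst hm; simp [tpj, h]
  · have : m < i + 1 ∧ itv m = none ↔ m < i ∧ itv m = none := by
      constructor
      · rintro ⟨h1, h2⟩; exact ⟨by omega, h2⟩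
      · rintro ⟨h1, h2⟩; exact ⟨by omega, h2⟩
    simp only [tpj]
    rw [if_congr this rfl rfl]

theorem tpj_succ_none {itv : ℕ → Option Bool} {i} (x b) (h : itv i = none) :
    tpj itv x b (i+1) = Function.update (tpj itv x b i) i (b.wit i) := by
  funext m
  by_cases hm : m = i
  · subst hm; simp [tpj, h]
  · rw [Function.update_of_ne hm]
    have : m < i + 1 ∧ itv m = none ↔ m < i ∧ itv m = none := by
      constructor
      · rintro ⟨h1, h2⟩; exact ⟨by omega, h2⟩
      · rintro ⟨h1, h2⟩; exact ⟨by omega, h2⟩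
    simp only [tpj]
    rw [if_congr this rfl rfl]

theorem tpj_last (N itv x b) : tpj itv x b (N+1) = finalT N itv x b := by
  funext m
  cases h : itv m with
  | some a => simp [tpj, finalT, h, initTape]
  | none => simp [tpj, finalT, h, initTape, Nat.lt_succ_iff]

theorem tpj_self {itv : ℕ → Option Bool} {i a} (x b) (h : itv i = some a) :
    tpj itv x b i i = a := by
  simp [tpj, h, initTape]

theorem tpj_self_none {itv : ℕ → Option Bool} {i} (x b) (h : itv i = none) :
    tpj itv x b i i = initTape itv x i := by
  simp [tpj]

/-! ### writeTape helpers -/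

theorem writeTape_self (itv : ℕ → Option Bool) (t : ℕ → Bool) (p : ℕ) :
    writeTape itv t p (t p) = t := by
  unfold writeTape
  split
  · exact Function.update_eq_self p t
  · rfl

theorem writeTape_some {itv : ℕ → Option Bool} {p : ℕ} {a} (t v) (h : itv p = some a) :
    writeTape itv t p v = t := by
  unfold writeTape
  split
  · simp_all
  · rfl

theorem writeTape_none {itv : ℕ → Option Bool} {p : ℕ} (t v) (h : itv p = none) :
    writeTape itv t p v = Function.update t p v := by
  unfold writeTape
  split
  · rfl
  · simp_all

end CausalSim

namespace CausalSim

theorem mem_machineOf_iff {N : ℕ} {bs : List Br} {r : Rule} :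
    r ∈ machineOf N bs ↔
      (r = ((0, true), (1, true, true)) ∨ r = ((0, false), (1, false, true)) ∨
       r = ((1, true), (1, true, true)) ∨ r = ((1, false), (1, false, true))) ∨
      ∃ j < bs.length,
        (r = ((0, true), (stS j 0, true, false)) ∨ r = ((0, false), (stS j 0, false, false)) ∨
         ∃ i ≤ N, r ∈ posRules j (bs.getD j defBr) i) := by
  simp [machineOf, branchRules, List.mem_append, List.mem_flatMap, List.mem_range,
    Nat.lt_succ_iff]
  aesop

theorem mem_posRules_elim {j i : ℕ} {b : Br} {r : Rule} (h : r ∈ posRules j b i) :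
    (∃ a, b.sig i = some a ∧
       (r = ((stS j i, a), (stB1 j i a, !a, true)) ∨ r = ((stS j i, !a), (1, !a, true)) ∨
        r = ((stB2 j i a, a), (stS j (i+1), a, true)) ∨
        r = ((stB2 j i a, !a), (1, !a, true)))) ∨
    (b.sig i = none ∧
       (r = ((stS j i, true), (stB1 j i true, false, true)) ∨
        r = ((stS j i, false), (stB1 j i false, true, true)) ∨
        r = ((stB2 j i true, false), (stS j (i+1), b.wit i, true)) ∨
        r = ((stB2 j i true, true), (1, true, true)) ∨
        r = ((stB2 j i false, true), (stS j (i+1), b.wit i, true)) ∨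
        r = ((stB2 j i false, false), (1, false, true)))) ∨
    (∃ c d : Bool, r = ((stB1 j i c, d), (stB2 j i c, d, false))) := by
  cases hσ : b.sig i with
  | some a =>
    simp [posRules, hσ] at h
    rcases h with h|h|h|h|h|h|h|h
    · exact Or.inl ⟨a, rfl, Or.inl h⟩
    · exact Or.inl ⟨a, rfl, Or.inr (Or.inl h)⟩
    · exact Or.inl ⟨a, rfl, Or.inr (Or.inr (Or.inl h))⟩
    · exact Or.inl ⟨a, rfl, Or.inr (Or.inr (Or.inr h))⟩
    · exact Or.inr (Or.inr ⟨true, true, h⟩)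
    · exact Or.inr (Or.inr ⟨true, false, h⟩)
    · exact Or.inr (Or.inr ⟨false, true, h⟩)
    · exact Or.inr (Or.inr ⟨false, false, h⟩)
  | none =>
    simp [posRules, hσ] at h
    rcases h with h|h|h|h|h|h|h|h|h|h
    · exact Or.inr (Or.inl ⟨rfl, Or.inl h⟩)
    · exact Or.inr (Or.inl ⟨rfl, Or.inr (Or.inl h)⟩)
    · exact Or.inr (Or.inl ⟨rfl, Or.inr (Or.inr (Or.inl h))⟩)
    · exact Or.inr (Or.inl ⟨rfl, Or.inr (Or.inr (Or.inr (Or.inl h)))⟩)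
    · exact Or.inr (Or.inl ⟨rfl, Or.inr (Or.inr (Or.inr (Or.inr (Or.inl h))))⟩)
    · exact Or.inr (Or.inl ⟨rfl, Or.inr (Or.inr (Or.inr (Or.inr (Or.inr h))))⟩)
    · exact Or.inr (Or.inr ⟨true, true, h⟩)
    · exact Or.inr (Or.inr ⟨true, false, h⟩)
    · exact Or.inr (Or.inr ⟨false, true, h⟩)
    · exact Or.inr (Or.inr ⟨false, false, h⟩)

end CausalSim

namespace CausalSim

theorem zero_ne_stS (j i : ℕ) : (0 : ℕ) ≠ stS j i := (stS_ne_zero j i).symm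
theorem one_ne_stS (j i : ℕ) : (1 : ℕ) ≠ stS j i := (stS_ne_one j i).symm
theorem zero_ne_stB1 (j i c) : (0 : ℕ) ≠ stB1 j i c := (stB1_ne_zero j i c).symm
theorem one_ne_stB1 (j i c) : (1 : ℕ) ≠ stB1 j i c := (stB1_ne_one j i c).symm
theorem zero_ne_stB2 (j i c) : (0 : ℕ) ≠ stB2 j i c := (stB2_ne_zero j i c).symm
theorem one_ne_stB2 (j i c) : (1 : ℕ) ≠ stB2 j i c := (stB2_ne_one j i c).symm
theorem stB1_ne_stS (j i c j' i') : stB1 j i c ≠ stS j' i' := (stS_ne_stB1 j' i' j i c).symm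
theorem stB2_ne_stS (j i c j' i') : stB2 j i c ≠ stS j' i' := (stS_ne_stB2 j' i' j i c).symm
theorem stB2_ne_stB1 (j i c j' i' c') : stB2 j i c ≠ stB1 j' i' c' :=
  (stB1_ne_stB2 j' i' c' j i c).symm

theorem posRules_state {j i : ℕ} {b : Br} {r : Rule} (h : r ∈ posRules j b i) :
    r.1.1 = stS j i ∨ (∃ c, r.1.1 = stB1 j i c) ∨ (∃ c, r.1.1 = stB2 j i c) := by
  rcases mem_posRules_elim h with ⟨a, _, h|h|h|h⟩ | ⟨_, h|h|h|h|h|h⟩ | ⟨c, d, h⟩ <;> subst h <;>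
    first
      | exact Or.inl rfl
      | exact Or.inr (Or.inl ⟨_, rfl⟩)
      | exact Or.inr (Or.inr ⟨_, rfl⟩)

/-- The invariant describing all reachable configurations of `machineOf N bs`. -/
def Inv (N : ℕ) (bs : List Br) (itv : ℕ → Option Bool) (x : ℕ → Bool) (c : Cfg) : Prop :=
  (c = ⟨0, 0, initTape itv x⟩) ∨ (c.q = 1) ∨
  ∃ j, j < bs.length ∧ ∃ i, i ≤ N + 1 ∧
    (∀ m, m < i → (bs.getD j defBr).sig m = itv m) ∧
    (c = ⟨stS j i, i, tpj itv x (bs.getD j defBr) i⟩ ∨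
     (i ≤ N ∧ ∃ c0 : Bool, tpj itv x (bs.getD j defBr) i i = c0 ∧
        (∀ a, (bs.getD j defBr).sig i = some a → a = c0) ∧
        (c = ⟨stB1 j i c0, i + 1, writeTape itv (tpj itv x (bs.getD j defBr) i) i (!c0)⟩ ∨
         c = ⟨stB2 j i c0, i, writeTape itv (tpj itv x (bs.getD j defBr) i) i (!c0)⟩)))


end CausalSim

namespace CausalSim

theorem rules_at {N : ℕ} {bs : List Br} {j i : ℕ} {r : Rule} (hrT : r ∈ machineOf N bs)
    (h : r.1.1 = stS j i ∨ (∃ c, r.1.1 = stB1 j i c) ∨ (∃ c, r.1.1 = stB2 j i c)) :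
    i ≤ N ∧ r ∈ posRules j (bs.getD j defBr) i := by
  rcases mem_machineOf_iff.mp hrT with (rfl|rfl|rfl|rfl) |
    ⟨j', hj', rfl|rfl|⟨i', hi', hpos⟩⟩
  · rcases h with h | ⟨c, h⟩ | ⟨c, h⟩
    · exact absurd h (zero_ne_stS _ _)
    · exact absurd h (zero_ne_stB1 _ _ _)
    · exact absurd h (zero_ne_stB2 _ _ _)
  · rcases h with h | ⟨c, h⟩ | ⟨c, h⟩
    · exact absurd h (zero_ne_stS _ _)
    · exact absurd h (zero_ne_stB1 _ _ _)
    · exact absurd h (zero_ne_stB2 _ _ _)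
  · rcases h with h | ⟨c, h⟩ | ⟨c, h⟩
    · exact absurd h (one_ne_stS _ _)
    · exact absurd h (one_ne_stB1 _ _ _)
    · exact absurd h (one_ne_stB2 _ _ _)
  · rcases h with h | ⟨c, h⟩ | ⟨c, h⟩
    · exact absurd h (one_ne_stS _ _)
    · exact absurd h (one_ne_stB1 _ _ _)
    · exact absurd h (one_ne_stB2 _ _ _)
  · rcases h with h | ⟨c, h⟩ | ⟨c, h⟩
    · exact absurd h (zero_ne_stS _ _)
    · exact absurd h (zero_ne_stB1 _ _ _)
    · exact absurd h (zero_ne_stB2 _ _ _)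
  · rcases h with h | ⟨c, h⟩ | ⟨c, h⟩
    · exact absurd h (zero_ne_stS _ _)
    · exact absurd h (zero_ne_stB1 _ _ _)
    · exact absurd h (zero_ne_stB2 _ _ _)
  · rcases posRules_state hpos with h' | ⟨c', h'⟩ | ⟨c', h'⟩ <;>
      rcases h with h | ⟨c, h⟩ | ⟨c, h⟩ <;> rw [h'] at h
    · obtain ⟨rfl, rfl⟩ := stS_eq_iff.mp h
      exact ⟨hi', hpos⟩
    · exact absurd h (stS_ne_stB1 _ _ _ _ _)
    · exact absurd h (stS_ne_stB2 _ _ _ _ _)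
    · exact absurd h (stB1_ne_stS _ _ _ _ _)
    · obtain ⟨rfl, rfl, rfl⟩ := stB1_eq_iff.mp h
      exact ⟨hi', hpos⟩
    · exact absurd h (stB1_ne_stB2 _ _ _ _ _ _)
    · exact absurd h (stB2_ne_stS _ _ _ _ _)
    · exact absurd h (stB2_ne_stB1 _ _ _ _ _ _)
    · obtain ⟨rfl, rfl, rfl⟩ := stB2_eq_iff.mp h
      exact ⟨hi', hpos⟩

end CausalSim

namespace CausalSim

theorem inv_step {N : ℕ} {bs : List Br} {itv : ℕ → Option Bool} {x : ℕ → Bool} {c c' : Cfg}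
    (hc : Inv N bs itv x c) (hs : MStep (machineOf N bs) itv c c') : Inv N bs itv x c' := by
  obtain ⟨r, hrT, hr1, rfl⟩ := hs
  rcases hc with rfl | hloop | ⟨j, hj, i, hiN, hgood, hcase⟩
  · -- initial configuration
    rcases mem_machineOf_iff.mp hrT with (rfl|rfl|rfl|rfl) |
      ⟨j, hj, rfl|rfl|⟨i, hiN, hpos⟩⟩
    · exact Or.inr (Or.inl rfl)
    · exact Or.inr (Or.inl rfl)
    · exact absurd (congrArg Prod.fst hr1) (by norm_num)
    · exact absurd (congrArg Prod.fst hr1) (by norm_num)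
    · -- start rule, read true
      have hv : initTape itv x 0 = true := (congrArg Prod.snd hr1).symm
      refine Or.inr (Or.inr ⟨j, hj, 0, by omega, fun m hm => absurd hm (by omega), Or.inl ?_⟩)
      show (⟨stS j 0, movePos 0 false, writeTape itv (initTape itv x) 0 true⟩ : Cfg) = _
      have h1 : movePos 0 false = 0 := by simp [movePos]
      have h2 : writeTape itv (initTape itv x) 0 true = initTape itv x := by
        rw [← hv]; exact writeTape_self _ _ _
      rw [tpj_zero, h1, h2]
    · have hv : initTape itv x 0 = false := (congrArg Prod.snd hr1).symm
      refine Or.inr (Or.inr ⟨j, hj, 0, by omega, fun m hm => absurd hm (by omega), Or.inl ?_⟩)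
      show (⟨stS j 0, movePos 0 false, writeTape itv (initTape itv x) 0 false⟩ : Cfg) = _
      have h1 : movePos 0 false = 0 := by simp [movePos]
      have h2 : writeTape itv (initTape itv x) 0 false = initTape itv x := by
        rw [← hv]; exact writeTape_self _ _ _
      rw [tpj_zero, h1, h2]
    · rcases posRules_state hpos with h | ⟨cc, h⟩ | ⟨cc, h⟩ <;>
        rw [congrArg Prod.fst hr1] at h
      · exact absurd h (zero_ne_stS _ _)
      · exact absurd h (zero_ne_stB1 _ _ _)
      · exact absurd h (zero_ne_stB2 _ _ _)
  · -- loop state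
    rcases mem_machineOf_iff.mp hrT with (rfl|rfl|rfl|rfl) |
      ⟨j, hj, rfl|rfl|⟨i, hiN, hpos⟩⟩
    · exact absurd (congrArg Prod.fst hr1) (by rw [hloop]; norm_num)
    · exact absurd (congrArg Prod.fst hr1) (by rw [hloop]; norm_num)
    · exact Or.inr (Or.inl rfl)
    · exact Or.inr (Or.inl rfl)
    · exact absurd (congrArg Prod.fst hr1) (by rw [hloop]; norm_num)
    · exact absurd (congrArg Prod.fst hr1) (by rw [hloop]; norm_num)
    · rcases posRules_state hpos with h | ⟨cc, h⟩ | ⟨cc, h⟩ <;>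
        rw [congrArg Prod.fst hr1, hloop] at h
      · exact absurd h (one_ne_stS _ _)
      · exact absurd h (one_ne_stB1 _ _ _)
      · exact absurd h (one_ne_stB2 _ _ _)
  · -- main branch configurations
    set b := bs.getD j defBr with hb
    rcases hcase with rfl | ⟨hiN2, c0, hread, hok, hcfg⟩
    · -- at scan state `stS j i`
      have hfst : r.1.1 = stS j i := congrArg Prod.fst hr1
      obtain ⟨hiN2, hpos⟩ := rules_at hrT (Or.inl hfst)
      have hv : r.1.2 = tpj itv x b i i := congrArg Prod.snd hr1
      rcases mem_posRules_elim hpos with ⟨a, hσ, rfl|rfl|rfl|rfl⟩ |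
        ⟨hσ, rfl|rfl|rfl|rfl|rfl|rfl⟩ | ⟨cc, d, rfl⟩
      · -- toggle an expectedly intervened position
        refine Or.inr (Or.inr ⟨j, hj, i, hiN, hgood, Or.inr ⟨hiN2, a, hv.symm, ?_, Or.inl ?_⟩⟩)
        · intro a' ha'
          rw [hσ] at ha'
          exact (Option.some.inj ha').symm
        · show (⟨stB1 j i a, movePos i true, _⟩ : Cfg) = _
          rw [show movePos i true = i + 1 from rfl]
      · exact Or.inr (Or.inl rfl)
      · exact absurd (congrArg Prod.fst rfl ▸ congrArg Prod.fst hr1) (stB2_ne_stS _ _ _ _ _)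
      · exact absurd (congrArg Prod.fst hr1) (stB2_ne_stS _ _ _ _ _)
      · -- free position, read true
        refine Or.inr (Or.inr ⟨j, hj, i, hiN, hgood, Or.inr ⟨hiN2, true, hv.symm, ?_, Or.inl ?_⟩⟩)
        · intro a' ha'; rw [hσ] at ha'; cases ha'
        · show (⟨stB1 j i true, movePos i true, writeTape itv (tpj itv x b i) i false⟩ : Cfg) = _
          rw [show movePos i true = i + 1 from rfl, show (!true) = false from rfl]
      · refine Or.inr (Or.inr ⟨j, hj, i, hiN, hgood, Or.inr ⟨hiN2, false, hv.symm, ?_, Or.inl ?_⟩⟩)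
        · intro a' ha'; rw [hσ] at ha'; cases ha'
        · show (⟨stB1 j i false, movePos i true, writeTape itv (tpj itv x b i) i true⟩ : Cfg) = _
          rw [show movePos i true = i + 1 from rfl, show (!false) = true from rfl]
      · exact absurd (congrArg Prod.fst hr1) (stB2_ne_stS _ _ _ _ _)
      · exact absurd (congrArg Prod.fst hr1) (stB2_ne_stS _ _ _ _ _)
      · exact absurd (congrArg Prod.fst hr1) (stB2_ne_stS _ _ _ _ _)
      · exact absurd (congrArg Prod.fst hr1) (stB2_ne_stS _ _ _ _ _)
      · exact absurd (congrArg Prod.fst hr1) (stB1_ne_stS _ _ _ _ _)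
    rcases hcfg with rfl | rfl
    · -- at bounce state `stB1 j i c0`
      have hfst : r.1.1 = stB1 j i c0 := congrArg Prod.fst hr1
      obtain ⟨-, hpos⟩ := rules_at hrT (Or.inr (Or.inl ⟨c0, hfst⟩))
      have hv : r.1.2 = writeTape itv (tpj itv x b i) i (!c0) (i + 1) := congrArg Prod.snd hr1
      rcases mem_posRules_elim hpos with ⟨a, hσ, rfl|rfl|rfl|rfl⟩ |
        ⟨hσ, rfl|rfl|rfl|rfl|rfl|rfl⟩ | ⟨cc, d, rfl⟩
      · exact absurd hfst (stS_ne_stB1 _ _ _ _ _)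
      · exact absurd hfst (stS_ne_stB1 _ _ _ _ _)
      · exact absurd hfst (stB2_ne_stB1 _ _ _ _ _ _)
      · exact absurd hfst (stB2_ne_stB1 _ _ _ _ _ _)
      · exact absurd hfst (stS_ne_stB1 _ _ _ _ _)
      · exact absurd hfst (stS_ne_stB1 _ _ _ _ _)
      · exact absurd hfst (stB2_ne_stB1 _ _ _ _ _ _)
      · exact absurd hfst (stB2_ne_stB1 _ _ _ _ _ _)
      · exact absurd hfst (stB2_ne_stB1 _ _ _ _ _ _)
      · exact absurd hfst (stB2_ne_stB1 _ _ _ _ _ _)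
      · obtain ⟨-, -, rfl⟩ := stB1_eq_iff.mp hfst
        refine Or.inr (Or.inr ⟨j, hj, i, hiN, hgood,
          Or.inr ⟨hiN2, cc, hread, hok, Or.inr ?_⟩⟩)
        have hd : d = writeTape itv (tpj itv x b i) i (!cc) (i + 1) := hv
        show (⟨stB2 j i cc, movePos (i+1) false, _⟩ : Cfg) = _
        rw [show movePos (i+1) false = i from rfl, hd, writeTape_self]
    · -- at check state `stB2 j i c0`
      have hfst : r.1.1 = stB2 j i c0 := congrArg Prod.fst hr1
      obtain ⟨-, hpos⟩ := rules_at hrT (Or.inr (Or.inr ⟨c0, hfst⟩))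
      have hv : r.1.2 = writeTape itv (tpj itv x b i) i (!c0) i := congrArg Prod.snd hr1
      rcases mem_posRules_elim hpos with ⟨a, hσ, rfl|rfl|rfl|rfl⟩ |
        ⟨hσ, rfl|rfl|rfl|rfl|rfl|rfl⟩ | ⟨cc, d, rfl⟩
      · exact absurd hfst (stS_ne_stB2 _ _ _ _ _)
      · exact absurd hfst (stS_ne_stB2 _ _ _ _ _)
      · -- confirmed intervened: continue the scan
        obtain ⟨-, -, rfl⟩ := stB2_eq_iff.mp hfst
        cases hiv : itv i with
        | none =>
          exfalso
          rw [writeTape_none _ _ hiv] at hv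
          simp at hv
        | some a'' =>
          have htp : tpj itv x b i i = a'' := tpj_self x b hiv
          have hac : a'' = a := by rw [hread] at htp; exact htp.symm ▸ rfl
          refine Or.inr (Or.inr ⟨j, hj, i + 1, by omega, ?_, Or.inl ?_⟩)
          · intro m hm
            rcases Nat.lt_succ_iff_lt_or_eq.mp hm with hm' | rfl
            · exact hgood m hm'
            · rw [hσ, hiv, hac]
          · show (⟨stS j (i+1), movePos i true, _⟩ : Cfg) = _
            rw [show movePos i true = i + 1 from rfl,
              writeTape_some _ _ hiv, writeTape_some _ _ hiv, tpj_succ_some x b hiv]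
      · exact Or.inr (Or.inl rfl)
      · exact absurd hfst (stS_ne_stB2 _ _ _ _ _)
      · exact absurd hfst (stS_ne_stB2 _ _ _ _ _)
      · -- confirmed free (c0 = true): write the witness bit and continue
        obtain ⟨-, -, hc0⟩ := stB2_eq_iff.mp hfst
        subst hc0
        cases hiv : itv i with
        | some a'' =>
          exfalso
          rw [writeTape_some _ _ hiv, hread] at hv
          exact absurd hv.symm (by simp)
        | none =>
          refine Or.inr (Or.inr ⟨j, hj, i + 1, by omega, ?_, Or.inl ?_⟩)
          · intro m hm
            rcases Nat.lt_succ_iff_lt_or_eq.mp hm with hm' | rfl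
            · exact hgood m hm'
            · rw [hσ, hiv]
          · show (⟨stS j (i+1), movePos i true, _⟩ : Cfg) = _
            rw [show movePos i true = i + 1 from rfl, writeTape_none _ _ hiv,
              writeTape_none _ _ hiv, Function.update_idem, tpj_succ_none x b hiv]
      · exact Or.inr (Or.inl rfl)
      · obtain ⟨-, -, hc0⟩ := stB2_eq_iff.mp hfst
        subst hc0
        cases hiv : itv i with
        | some a'' =>
          exfalso
          rw [writeTape_some _ _ hiv, hread] at hv
          exact absurd hv.symm (by simp)
        | none =>
          refine Or.inr (Or.inr ⟨j, hj, i + 1, by omega, ?_, Or.inl ?_⟩)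
          · intro m hm
            rcases Nat.lt_succ_iff_lt_or_eq.mp hm with hm' | rfl
            · exact hgood m hm'
            · rw [hσ, hiv]
          · show (⟨stS j (i+1), movePos i true, _⟩ : Cfg) = _
            rw [show movePos i true = i + 1 from rfl, writeTape_none _ _ hiv,
              writeTape_none _ _ hiv, Function.update_idem, tpj_succ_none x b hiv]
      · exact Or.inr (Or.inl rfl)
      · exact absurd hfst (stB1_ne_stB2 _ _ _ _ _ _)

end CausalSim

namespace CausalSim

theorem pos_mem {N : ℕ} {bs : List Br} {j i : ℕ} {r : Rule} (hj : j < bs.length) (hi : i ≤ N)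
    (h : r ∈ posRules j (bs.getD j defBr) i) : r ∈ machineOf N bs :=
  mem_machineOf_iff.mpr (Or.inr ⟨j, hj, Or.inr (Or.inr ⟨i, hi, h⟩)⟩)

theorem start_mem {N : ℕ} {bs : List Br} {j : ℕ} (hj : j < bs.length) (cv : Bool) :
    ((0, cv), (stS j 0, cv, false)) ∈ machineOf N bs := by
  refine mem_machineOf_iff.mpr (Or.inr ⟨j, hj, ?_⟩)
  cases cv
  · exact Or.inr (Or.inl rfl)
  · exact Or.inl rfl

theorem mem_S_some {j i : ℕ} {b : Br} {a : Bool} (h : b.sig i = some a) :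
    ((stS j i, a), (stB1 j i a, !a, true)) ∈ posRules j b i := by
  simp [posRules, h]

theorem mem_S_some_loop {j i : ℕ} {b : Br} {a : Bool} (h : b.sig i = some a) :
    ((stS j i, !a), (1, !a, true)) ∈ posRules j b i := by
  simp [posRules, h]

theorem mem_S_none {j i : ℕ} {b : Br} (c : Bool) (h : b.sig i = none) :
    ((stS j i, c), (stB1 j i c, !c, true)) ∈ posRules j b i := by
  cases c <;> simp [posRules, h]

theorem mem_B1_rule {j i : ℕ} {b : Br} (c d : Bool) :
    ((stB1 j i c, d), (stB2 j i c, d, false)) ∈ posRules j b i := by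
  cases hσ : b.sig i <;> cases c <;> cases d <;> simp [posRules, hσ]

theorem mem_B2_some {j i : ℕ} {b : Br} {a : Bool} (h : b.sig i = some a) :
    ((stB2 j i a, a), (stS j (i+1), a, true)) ∈ posRules j b i := by
  simp [posRules, h]

theorem mem_B2_some_loop {j i : ℕ} {b : Br} {a : Bool} (h : b.sig i = some a) :
    ((stB2 j i a, !a), (1, !a, true)) ∈ posRules j b i := by
  simp [posRules, h]

theorem mem_B2_none {j i : ℕ} {b : Br} (c : Bool) (h : b.sig i = none) :
    ((stB2 j i c, !c), (stS j (i+1), b.wit i, true)) ∈ posRules j b i := by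
  cases c <;> simp [posRules, h]

theorem mem_B2_none_loop {j i : ℕ} {b : Br} (c : Bool) (h : b.sig i = none) :
    ((stB2 j i c, c), (1, c, true)) ∈ posRules j b i := by
  cases c <;> simp [posRules, h]

theorem bool_eq_or (v a : Bool) : v = a ∨ v = !a := by cases v <;> cases a <;> simp

theorem inv_halted {N : ℕ} {bs : List Br} {itv : ℕ → Option Bool} {x : ℕ → Bool} {c : Cfg}
    (hc : Inv N bs itv x c) (hh : Halted (machineOf N bs) c) :
    ∃ j, j < bs.length ∧ MatchB N itv (bs.getD j defBr) ∧
      c.tape = finalT N itv x (bs.getD j defBr) := by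
  rcases hc with rfl | hloop | ⟨j, hj, i, hiN, hgood, hcase⟩
  · exfalso
    cases hx : initTape itv x 0 with
    | true =>
      exact hh ((0, true), (1, true, true)) (mem_machineOf_iff.mpr (Or.inl (Or.inl rfl)))
        (by simp [hx])
    | false =>
      exact hh ((0, false), (1, false, true))
        (mem_machineOf_iff.mpr (Or.inl (Or.inr (Or.inl rfl)))) (by simp [hx])
  · exfalso
    cases hx : c.tape c.pos with
    | true =>
      exact hh ((1, true), (1, true, true))
        (mem_machineOf_iff.mpr (Or.inl (Or.inr (Or.inr (Or.inl rfl)))))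
        (by rw [hloop, hx])
    | false =>
      exact hh ((1, false), (1, false, true))
        (mem_machineOf_iff.mpr (Or.inl (Or.inr (Or.inr (Or.inr rfl)))))
        (by rw [hloop, hx])
  · set b := bs.getD j defBr with hbb
    rcases hcase with rfl | ⟨hiN2, c0, hread, hok, (rfl | rfl)⟩
    · by_cases hi : i ≤ N
      · exfalso
        cases hσ : b.sig i with
        | some a =>
          rcases bool_eq_or (tpj itv x b i i) a with hv | hv
          · exact hh _ (pos_mem hj hi (mem_S_some hσ)) (congrArg (Prod.mk _) hv.symm)
          · exact hh _ (pos_mem hj hi (mem_S_some_loop hσ)) (congrArg (Prod.mk _) hv.symm)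
        | none =>
          exact hh _ (pos_mem hj hi (mem_S_none (tpj itv x b i i) hσ)) rfl
      · have hi' : i = N + 1 := by omega
        subst hi'
        exact ⟨j, hj, fun m hm => hgood m (by omega), tpj_last N itv x b⟩
    · exact absurd rfl
        (hh _ (pos_mem hj hiN2 (mem_B1_rule c0 (writeTape itv (tpj itv x b i) i (!c0) (i+1)))))
    · exfalso
      cases hσ : b.sig i with
      | some a =>
        have ha := hok a hσ
        subst ha
        rcases bool_eq_or (writeTape itv (tpj itv x b i) i (!a) i) a with hv | hv
        · exact hh _ (pos_mem hj hiN2 (mem_B2_some hσ)) (congrArg (Prod.mk _) hv.symm)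
        · exact hh _ (pos_mem hj hiN2 (mem_B2_some_loop hσ)) (congrArg (Prod.mk _) hv.symm)
      | none =>
        rcases bool_eq_or (writeTape itv (tpj itv x b i) i (!c0) i) c0 with hv | hv
        · exact hh _ (pos_mem hj hiN2 (mem_B2_none_loop c0 hσ)) (congrArg (Prod.mk _) hv.symm)
        · exact hh _ (pos_mem hj hiN2 (mem_B2_none c0 hσ)) (congrArg (Prod.mk _) hv.symm)

theorem reach_inv {N : ℕ} {bs : List Br} {itv : ℕ → Option Bool} {x : ℕ → Bool} {c : Cfg}
    (h : Relation.ReflTransGen (MStep (machineOf N bs) itv) ⟨0, 0, initTape itv x⟩ c) :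
    Inv N bs itv x c := by
  induction h with
  | refl => exact Or.inl rfl
  | tail h1 h2 ih => exact inv_step ih h2

end CausalSim

namespace CausalSim

theorem run_seg {N : ℕ} {bs : List Br} {itv : ℕ → Option Bool} {x : ℕ → Bool} {j : ℕ}
    (hj : j < bs.length) (hM : MatchB N itv (bs.getD j defBr)) :
    ∀ i, i ≤ N + 1 → Relation.ReflTransGen (MStep (machineOf N bs) itv)
      ⟨stS j 0, 0, initTape itv x⟩
      ⟨stS j i, i, tpj itv x (bs.getD j defBr) i⟩ := by
  set b := bs.getD j defBr with hbb
  intro i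
  induction i with
  | zero => intro _; rw [tpj_zero]
  | succ i ih =>
    intro hi
    have hiN : i ≤ N := by omega
    have ihr := ih (by omega)
    have hσ := hM i hiN
    set tp := tpj itv x b i with htpdef
    cases hiv : itv i with
    | some a =>
      rw [hiv] at hσ
      have htp : tp i = a := tpj_self x b hiv
      have s1 : MStep (machineOf N bs) itv ⟨stS j i, i, tp⟩ ⟨stB1 j i a, i+1, tp⟩ := by
        refine ⟨((stS j i, a), (stB1 j i a, !a, true)), pos_mem hj hiN (mem_S_some hσ),
          congrArg (Prod.mk _) htp.symm, ?_⟩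
        show _ = (⟨stB1 j i a, movePos i true, writeTape itv tp i (!a)⟩ : Cfg)
        rw [writeTape_some _ _ hiv, show movePos i true = i + 1 from rfl]
      have s2 : MStep (machineOf N bs) itv ⟨stB1 j i a, i+1, tp⟩ ⟨stB2 j i a, i, tp⟩ := by
        refine ⟨((stB1 j i a, tp (i+1)), (stB2 j i a, tp (i+1), false)),
          pos_mem hj hiN (mem_B1_rule a (tp (i+1))), rfl, ?_⟩
        show _ = (⟨stB2 j i a, movePos (i+1) false, writeTape itv tp (i+1) (tp (i+1))⟩ : Cfg)
        rw [writeTape_self, show movePos (i+1) false = i from rfl]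
      have s3 : MStep (machineOf N bs) itv ⟨stB2 j i a, i, tp⟩
          ⟨stS j (i+1), i+1, tpj itv x b (i+1)⟩ := by
        refine ⟨((stB2 j i a, a), (stS j (i+1), a, true)), pos_mem hj hiN (mem_B2_some hσ),
          congrArg (Prod.mk _) htp.symm, ?_⟩
        show _ = (⟨stS j (i+1), movePos i true, writeTape itv tp i a⟩ : Cfg)
        rw [writeTape_some _ _ hiv, htpdef, tpj_succ_some x b hiv, show movePos i true = i + 1 from rfl]
      exact ((ihr.tail s1).tail s2).tail s3
    | none =>
      rw [hiv] at hσ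
      set cv := tp i with hcv
      have s1 : MStep (machineOf N bs) itv ⟨stS j i, i, tp⟩
          ⟨stB1 j i cv, i+1, Function.update tp i (!cv)⟩ := by
        refine ⟨((stS j i, cv), (stB1 j i cv, !cv, true)), pos_mem hj hiN (mem_S_none cv hσ),
          rfl, ?_⟩
        show _ = (⟨stB1 j i cv, movePos i true, writeTape itv tp i (!cv)⟩ : Cfg)
        rw [writeTape_none _ _ hiv, show movePos i true = i + 1 from rfl]
      have s2 : MStep (machineOf N bs) itv ⟨stB1 j i cv, i+1, Function.update tp i (!cv)⟩
          ⟨stB2 j i cv, i, Function.update tp i (!cv)⟩ := by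
        refine ⟨((stB1 j i cv, Function.update tp i (!cv) (i+1)),
          (stB2 j i cv, Function.update tp i (!cv) (i+1), false)),
          pos_mem hj hiN (mem_B1_rule cv _), rfl, ?_⟩
        show _ = (⟨stB2 j i cv, movePos (i+1) false, _⟩ : Cfg)
        rw [writeTape_self, show movePos (i+1) false = i from rfl]
      have s3 : MStep (machineOf N bs) itv ⟨stB2 j i cv, i, Function.update tp i (!cv)⟩
          ⟨stS j (i+1), i+1, tpj itv x b (i+1)⟩ := by
        refine ⟨((stB2 j i cv, !cv), (stS j (i+1), b.wit i, true)),
          pos_mem hj hiN (mem_B2_none cv hσ),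
          congrArg (Prod.mk _) (Function.update_self i (!cv) tp).symm, ?_⟩
        show _ = (⟨stS j (i+1), movePos i true,
          writeTape itv (Function.update tp i (!cv)) i (b.wit i)⟩ : Cfg)
        rw [writeTape_none _ _ hiv, Function.update_idem, htpdef, tpj_succ_none x b hiv, show movePos i true = i + 1 from rfl]
      exact ((ihr.tail s1).tail s2).tail s3

theorem outputs_machineOf (N : ℕ) (bs : List Br) (itv : ℕ → Option Bool) (x : ℕ → Bool) :
    Outputs (machineOf N bs) itv x =
      {t | ∃ j, j < bs.length ∧ MatchB N itv (bs.getD j defBr) ∧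
        t = finalT N itv x (bs.getD j defBr)} := by
  ext t
  constructor
  · rintro ⟨c, hreach, hhalt, rfl⟩
    obtain ⟨j, hj, hm, ht⟩ := inv_halted (reach_inv hreach) hhalt
    exact ⟨j, hj, hm, ht⟩
  · rintro ⟨j, hj, hM, rfl⟩
    refine ⟨⟨stS j (N+1), N+1, tpj itv x (bs.getD j defBr) (N+1)⟩, ?_, ?_, ?_⟩
    · refine Relation.ReflTransGen.head ?_ (run_seg hj hM (N+1) le_rfl)
      refine ⟨((0, initTape itv x 0), (stS j 0, initTape itv x 0, false)),
        start_mem hj _, rfl, ?_⟩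
      show _ = (⟨stS j 0, movePos 0 false, writeTape itv (initTape itv x) 0
        (initTape itv x 0)⟩ : Cfg)
      rw [writeTape_self, show movePos 0 false = 0 from rfl]
    · intro r hr heq
      have hfst : r.1.1 = stS j (N+1) := by rw [heq]
      rcases mem_machineOf_iff.mp hr with (rfl|rfl|rfl|rfl) |
        ⟨j', hj', rfl|rfl|⟨i', hi', hpos⟩⟩
      · exact zero_ne_stS _ _ hfst
      · exact zero_ne_stS _ _ hfst
      · exact one_ne_stS _ _ hfst
      · exact one_ne_stS _ _ hfst
      · exact zero_ne_stS _ _ hfst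
      · exact zero_ne_stS _ _ hfst
      · rcases posRules_state hpos with h | ⟨c, h⟩ | ⟨c, h⟩
        · obtain ⟨-, hii⟩ := stS_eq_iff.mp (h.symm.trans hfst)
          omega
        · exact stB1_ne_stS _ _ _ _ _ (h.symm.trans hfst)
        · exact stB2_ne_stS _ _ _ _ _ (h.symm.trans hfst)
    · exact tpj_last N itv x _

end CausalSim

namespace CausalSim

/-! ### Syntax helpers -/

/-- The `X`-atoms occurring in an `L`-formula. -/
def LForm.xatoms : LForm → List ℕ
  | .atom i => [i]
  | .cond _ _ => []
  | .neg φ => φ.xatoms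
  | .and φ ψ => φ.xatoms ++ ψ.xatoms
  | .or φ ψ => φ.xatoms ++ ψ.xatoms

/-- The conditionals occurring in an `L`-formula. -/
def LForm.conds : LForm → List (Lint × PropForm)
  | .atom _ => []
  | .cond α β => [(α, β)]
  | .neg φ => φ.conds
  | .and φ ψ => φ.conds ++ ψ.conds
  | .or φ ψ => φ.conds ++ ψ.conds

theorem evalA_toL (v : ℕ → Bool) (w : Lint → PropForm → Bool) :
    ∀ β : PropForm, β.toL.evalA v w = β.eval v := by
  intro β
  induction β with
  | atom i => rfl
  | neg φ ih => simp [PropForm.toL, LForm.evalA, PropForm.eval, ih]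
  | and φ ψ ih1 ih2 => simp [PropForm.toL, LForm.evalA, PropForm.eval, ih1, ih2]
  | or φ ψ ih1 ih2 => simp [PropForm.toL, LForm.evalA, PropForm.eval, ih1, ih2]

theorem eval_congr {v v' : ℕ → Bool} :
    ∀ β : PropForm, (∀ i, i ≤ β.maxAtom → v i = v' i) → β.eval v = β.eval v' := by
  intro β
  induction β with
  | atom i => intro h; exact h i le_rfl
  | neg φ ih => intro h; simp [PropForm.eval, ih h]
  | and φ ψ ih1 ih2 =>
    intro h
    have h1 := ih1 fun i hi => h i (le_trans hi (le_max_left _ _))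
    have h2 := ih2 fun i hi => h i (le_trans hi (le_max_right _ _))
    simp [PropForm.eval, h1, h2]
  | or φ ψ ih1 ih2 =>
    intro h
    have h1 := ih1 fun i hi => h i (le_trans hi (le_max_left _ _))
    have h2 := ih2 fun i hi => h i (le_trans hi (le_max_right _ _))
    simp [PropForm.eval, h1, h2]

/-! ### `Lint` facts -/

theorem foldr_max_le {l : List ℕ} {i : ℕ} (h : i ∈ l) : i ≤ l.foldr max 0 := by
  induction l with
  | nil => cases h
  | cons a l ih =>
    rcases List.mem_cons.mp h with rfl | h'
    · exact le_max_left _ _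
    · exact le_trans (ih h') (le_max_right _ _)

theorem lint_pairwise (α : Lint) : α.1.Pairwise (fun p q => p.1 < q.1) := by
  haveI : IsTrans (ℕ × Bool) (fun p q => p.1 < q.1) := ⟨fun _ _ _ h1 h2 => Nat.lt_trans h1 h2⟩
  exact List.isChain_iff_pairwise.mp α.2

theorem find_key {l : List (ℕ × Bool)} (hl : l.Pairwise (fun p q => p.1 < q.1)) (i : ℕ) (b : Bool) :
    ((l.find? fun p => p.1 == i).map Prod.snd = some b) ↔ (i, b) ∈ l := by
  induction l with
  | nil => simp
  | cons p l ih =>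
    rcases List.pairwise_cons.mp hl with ⟨hp, hl'⟩
    by_cases hpi : p.1 = i
    · rw [List.find?_cons_of_pos (by simp [hpi])]
      simp only [Option.map_some, Option.some.injEq, List.mem_cons]
      constructor
      · rintro rfl
        exact Or.inl (by rw [← hpi])
      · rintro (h | h)
        · rw [← h]
        · exact absurd (hp _ h) (by rw [hpi]; simp)
    · rw [List.find?_cons_of_neg (by simp [hpi])]
      rw [ih hl']
      simp only [List.mem_cons]
      constructor
      · exact Or.inr
      · rintro (h | h)
        · exact absurd (congrArg Prod.fst h).symm hpi
        · exact h

theorem Lint.itv_some {α : Lint} {i : ℕ} {b : Bool} :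
    α.itv i = some b ↔ (i, b) ∈ α.1 := by
  unfold Lint.itv
  exact find_key (lint_pairwise α) i b

theorem Lint.itv_key_le {α : Lint} {i : ℕ} {b : Bool} (h : α.itv i = some b) :
    i ≤ α.maxAtom := by
  have hm := Lint.itv_some.mp h
  exact foldr_max_le (List.mem_map.mpr ⟨(i, b), hm, rfl⟩)

theorem Lint.ext_of_itv {α α' : Lint} (h : ∀ i, α.itv i = α'.itv i) : α = α' := by
  have hmem : ∀ p : ℕ × Bool, p ∈ α.1 ↔ p ∈ α'.1 := by
    rintro ⟨i, b⟩
    rw [← Lint.itv_some, ← Lint.itv_some, h]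
  have hnd : ∀ γ : Lint, γ.1.Nodup := by
    intro γ
    refine (lint_pairwise γ).imp ?_
    intro p q hpq heq
    rw [heq] at hpq
    exact lt_irrefl _ hpq
  haveI : IsAntisymm (ℕ × Bool) (fun p q => p.1 < q.1) :=
    ⟨fun a b h1 h2 => absurd h2 (by omega)⟩
  refine Subtype.ext (List.Perm.eq_of_pairwise (fun a b _ _ h1 h2 => absurd (Nat.lt_trans h1 h2) (Nat.lt_irrefl _)) (lint_pairwise α) (lint_pairwise α') ?_)
  refine List.perm_of_nodup_nodup_toFinset_eq (hnd α) (hnd α') ?_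
  ext p
  simp only [List.mem_toFinset]
  exact hmem p

theorem eval_lit (y : ℕ → Bool) (p : ℕ × Bool) :
    ((PropForm.lit p).eval y = true) ↔ y p.1 = p.2 := by
  cases hp : p.2 <;> cases hy : y p.1 <;> simp [PropForm.lit, hp, PropForm.eval, hy]

theorem eval_foldl_and (y : ℕ → Bool) :
    ∀ (l : List (ℕ × Bool)) (acc : PropForm),
      (l.foldl (fun acc q => PropForm.and acc (.lit q)) acc).eval y =
        (acc.eval y && l.all fun q => (PropForm.lit q).eval y) := by
  intro l
  induction l with
  | nil => intro acc; simp
  | cons p l ih =>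
    intro acc
    rw [List.foldl_cons, ih]
    simp [PropForm.eval, Bool.and_assoc]

theorem Lint.eval_toProp {α : Lint} {y : ℕ → Bool} :
    α.toProp.eval y = true ↔ ∀ p ∈ α.1, y p.1 = p.2 := by
  obtain ⟨l, hl⟩ := α
  cases l with
  | nil =>
    simp [Lint.toProp, PropForm.top, PropForm.bot, PropForm.eval]
  | cons p l =>
    show (l.foldl (fun acc q => PropForm.and acc (.lit q)) (.lit p)).eval y = true ↔ _
    rw [eval_foldl_and]
    simp only [Bool.and_eq_true, List.all_eq_true, List.mem_cons]
    constructor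
    · rintro ⟨h1, h2⟩ q (rfl | hq)
      · exact (eval_lit y q).mp h1
      · exact (eval_lit y q).mp (h2 q hq)
    · intro hq
      exact ⟨(eval_lit y p).mpr (hq p (Or.inl rfl)),
        fun q hq' => (eval_lit y q).mpr (hq q (Or.inr hq'))⟩

/-- A tape respecting `α.toProp` agrees with `α.itv` wherever it is defined. -/
theorem eval_toProp_itv {α : Lint} {y : ℕ → Bool} (h : α.toProp.eval y = true)
    {i : ℕ} {b : Bool} (hi : α.itv i = some b) : y i = b :=
  Lint.eval_toProp.mp h _ (Lint.itv_some.mp hi)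

/-! ### Satisfaction vs propositional evaluation -/

theorem satGen_iff (O : Lint → Set (ℕ → Bool)) (x v : ℕ → Bool)
    (w : Lint → PropForm → Bool) :
    ∀ ψ : LForm,
      (∀ i ∈ ψ.xatoms, x i = v i) →
      (∀ p ∈ ψ.conds, (∀ y ∈ O p.1, p.2.eval y = true) ↔ w p.1 p.2 = true) →
      (SatGen O x ψ ↔ ψ.evalA v w = true) := by
  intro ψ
  induction ψ with
  | atom i =>
    intro hx _
    have := hx i (by simp [LForm.xatoms])
    simp [SatGen, LForm.evalA, this]
  | cond α β =>
    intro _ hw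
    exact hw (α, β) (by simp [LForm.conds])
  | neg φ ih =>
    intro hx hw
    have := ih hx hw
    simp [SatGen, LForm.evalA, this]
  | and φ ψ ih1 ih2 =>
    intro hx hw
    have h1 := ih1 (fun i hi => hx i (by simp [LForm.xatoms, hi]))
      (fun p hp => hw p (by simp [LForm.conds, hp]))
    have h2 := ih2 (fun i hi => hx i (by simp [LForm.xatoms, hi]))
      (fun p hp => hw p (by simp [LForm.conds, hp]))
    simp [SatGen, LForm.evalA, h1, h2]
  | or φ ψ ih1 ih2 =>
    intro hx hw
    have h1 := ih1 (fun i hi => hx i (by simp [LForm.xatoms, hi]))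
      (fun p hp => hw p (by simp [LForm.conds, hp]))
    have h2 := ih2 (fun i hi => hx i (by simp [LForm.xatoms, hi]))
      (fun p hp => hw p (by simp [LForm.conds, hp]))
    simp [SatGen, LForm.evalA, h1, h2]

/-! ### Atom bounds -/

theorem xatoms_le (ψ : LForm) : ∀ i ∈ ψ.xatoms, i ≤ ψ.maxAtom := by
  induction ψ with
  | atom j => intro i hi; rw [List.mem_singleton.mp hi]; exact le_rfl
  | cond α β => intro i hi; cases hi
  | neg φ ih => exact ih
  | and φ ψ ih1 ih2 =>
    intro i hi
    rcases List.mem_append.mp hi with h | h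
    · exact le_trans (ih1 i h) (le_max_left _ _)
    · exact le_trans (ih2 i h) (le_max_right _ _)
  | or φ ψ ih1 ih2 =>
    intro i hi
    rcases List.mem_append.mp hi with h | h
    · exact le_trans (ih1 i h) (le_max_left _ _)
    · exact le_trans (ih2 i h) (le_max_right _ _)

theorem conds_le (ψ : LForm) : ∀ p ∈ ψ.conds,
    p.1.maxAtom ≤ ψ.maxAtom ∧ p.2.maxAtom ≤ ψ.maxAtom := by
  induction ψ with
  | atom j => intro p hp; cases hp
  | cond α β =>
    intro p hp
    rw [List.mem_singleton.mp hp]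
    exact ⟨le_max_left _ _, le_max_right _ _⟩
  | neg φ ih => exact ih
  | and φ ψ ih1 ih2 =>
    intro p hp
    rcases List.mem_append.mp hp with h | h
    · exact ⟨le_trans (ih1 p h).1 (le_max_left _ _), le_trans (ih1 p h).2 (le_max_left _ _)⟩
    · exact ⟨le_trans (ih2 p h).1 (le_max_right _ _), le_trans (ih2 p h).2 (le_max_right _ _)⟩
  | or φ ψ ih1 ih2 =>
    intro p hp
    rcases List.mem_append.mp hp with h | h
    · exact ⟨le_trans (ih1 p h).1 (le_max_left _ _), le_trans (ih1 p h).2 (le_max_left _ _)⟩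
    · exact ⟨le_trans (ih2 p h).1 (le_max_right _ _), le_trans (ih2 p h).2 (le_max_right _ _)⟩

end CausalSim

namespace CausalSim

theorem taut_comp (A B C D : LForm) :
    Tautology ((A.imp (B.imp C)).imp ((C.imp D).imp (A.imp (B.imp D)))) := by
  intro v w
  simp only [LForm.imp, LForm.evalA]
  cases A.evalA v w <;> cases B.evalA v w <;> cases C.evalA v w <;> cases D.evalA v w <;> rfl

def curryP (S : List PropForm) (β : PropForm) : PropForm := S.foldr .imp β

def clauseL (α : Lint) (S : List PropForm) (β : PropForm) : LForm :=
  (S.map (LForm.cond α ·)).foldr .imp (.cond α β)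

def curryL (Cs : List LForm) (ψ : LForm) : LForm := Cs.foldr .imp ψ

theorem eval_curryP (y : ℕ → Bool) : ∀ (S : List PropForm) (β : PropForm),
    (curryP S β).eval y = true ↔ ((∀ b ∈ S, b.eval y = true) → β.eval y = true) := by
  intro S
  induction S with
  | nil => intro β; simp [curryP]
  | cons b S ih =>
    intro β
    show (PropForm.or (.neg b) (curryP S β)).eval y = true ↔ _
    cases hb : b.eval y <;>
      simp [PropForm.eval, hb, ih, List.forall_mem_cons]

theorem evalA_clauseL (v : ℕ → Bool) (w : Lint → PropForm → Bool) :
    ∀ (S : List PropForm) (α : Lint) (β : PropForm),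
      (clauseL α S β).evalA v w = true ↔ ((∀ b ∈ S, w α b = true) → w α β = true) := by
  intro S
  induction S with
  | nil => intro α β; simp [clauseL, LForm.evalA]
  | cons b S ih =>
    intro α β
    show (LForm.or (.neg (.cond α b)) (clauseL α S β)).evalA v w = true ↔ _
    cases hb : w α b <;>
      simp [LForm.evalA, hb, ih, List.forall_mem_cons]

theorem evalA_curryL (v : ℕ → Bool) (w : Lint → PropForm → Bool) :
    ∀ (Cs : List LForm) (ψ : LForm),
      (curryL Cs ψ).evalA v w = true ↔
        ((∀ C ∈ Cs, C.evalA v w = true) → ψ.evalA v w = true) := by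
  intro Cs
  induction Cs with
  | nil => intro ψ; simp [curryL]
  | cons C Cs ih =>
    intro ψ
    show (LForm.or (.neg C) (curryL Cs ψ)).evalA v w = true ↔ _
    cases hC : C.evalA v w <;>
      simp [LForm.evalA, hC, ih, List.forall_mem_cons]

theorem AX_cond_of_valid {α : Lint} {τ : PropForm}
    (h : ∀ y, α.toProp.eval y = true → τ.eval y = true) : AX (.cond α τ) := by
  have ht : Tautology ((α.toProp.imp τ).toL) := by
    intro v w
    rw [evalA_toL]
    show (PropForm.or (.neg α.toProp) τ).eval v = true
    cases hα : α.toProp.eval v with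
    | false => simp [PropForm.eval, hα]
    | true => simp [PropForm.eval, hα, h v hα]
  exact Deriv.mp (Deriv.rw α (Deriv.taut ht)) (Deriv.axR α)

theorem AX_imp_clause (α : Lint) (β : PropForm) :
    ∀ S : List PropForm, AX ((LForm.cond α (curryP S β)).imp (clauseL α S β)) := by
  intro S
  induction S with
  | nil =>
    refine Deriv.taut ?_
    intro v w
    show (!(w α (curryP [] β)) || w α β) = true
    cases hW : w α (curryP [] β) with
    | false => rfl
    | true => exact hW
  | cons b S ih =>
    have hK := Deriv.axK (extra := fun _ => False) α b (curryP S β)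
    have hT := Deriv.taut (extra := fun _ => False)
      (taut_comp (.cond α (PropForm.imp b (curryP S β))) (.cond α b)
        (.cond α (curryP S β)) (clauseL α S β))
    exact Deriv.mp (Deriv.mp hT hK) ih

def Forces (α : Lint) (S : List PropForm) (β : PropForm) : Prop :=
  ∀ y : ℕ → Bool, α.toProp.eval y = true → (∀ b ∈ S, b.eval y = true) → β.eval y = true

theorem AX_clause_of_forces {α : Lint} {S : List PropForm} {β : PropForm}
    (h : Forces α S β) : AX (clauseL α S β) :=
  Deriv.mp (AX_imp_clause α β S)
    (AX_cond_of_valid fun y hy => (eval_curryP y S β).mpr fun hS => h y hy hS)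

theorem AX_of_curry : ∀ (Cs : List LForm) (ψ : LForm),
    AX (curryL Cs ψ) → (∀ C ∈ Cs, AX C) → AX ψ := by
  intro Cs
  induction Cs with
  | nil => intro ψ h _; exact h
  | cons C Cs ih =>
    intro ψ h hC
    exact ih ψ (Deriv.mp h (hC C (by simp))) fun C' hC' => hC C' (by simp [hC'])

/-- Coherence of a conditional-atom valuation with respect to the conditionals of `φ`. -/
def Coh (φ : LForm) (w : Lint → PropForm → Bool) : Prop :=
  ∀ p ∈ φ.conds, w p.1 p.2 = false →
    ∃ y : ℕ → Bool, p.1.toProp.eval y = true ∧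
      (∀ q ∈ φ.conds, q.1 = p.1 → w q.1 q.2 = true → q.2.eval y = true) ∧
      p.2.eval y = false

theorem exists_coherent (φ : LForm) (h : ¬ AX (.neg φ)) :
    ∃ v w, φ.evalA v w = true ∧ Coh φ w := by
  classical
  by_contra hno
  push_neg at hno
  apply h
  set Cs : List LForm := φ.conds.flatMap (fun p =>
    ((φ.conds.map Prod.snd).sublists.filter fun S => decide (Forces p.1 S p.2)).map
      fun S => clauseL p.1 S p.2) with hCs
  refine AX_of_curry Cs (.neg φ) (Deriv.taut ?_) ?_
  · intro v w
    refine (evalA_curryL v w Cs _).mpr ?_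
    intro hall
    show (!(φ.evalA v w)) = true
    cases hφ : φ.evalA v w with
    | false => rfl
    | true =>
      exfalso
      have hnc := hno v w hφ
      unfold Coh at hnc
      push_neg at hnc
      obtain ⟨p, hp, hwf, hy⟩ := hnc
      set S : List PropForm :=
        (φ.conds.filter fun q => decide (q.1 = p.1) && w q.1 q.2).map Prod.snd with hS
      have hforces : Forces p.1 S p.2 := by
        intro y hα hSy
        have hb : ∀ q ∈ φ.conds, q.1 = p.1 → w q.1 q.2 = true → q.2.eval y = true := by
          intro q hq hq1 hqw
          exact hSy q.2 (List.mem_map.mpr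
            ⟨q, List.mem_filter.mpr ⟨hq,
              by simp only [Bool.and_eq_true, decide_eq_true_eq]; exact ⟨hq1, hqw⟩⟩, rfl⟩)
        have hne := hy y hα hb
        cases hc : p.2.eval y with
        | true => rfl
        | false => exact absurd hc hne
      have hmem : clauseL p.1 S p.2 ∈ Cs := by
        rw [hCs]
        refine List.mem_flatMap.mpr ⟨p, hp, List.mem_map.mpr
          ⟨S, List.mem_filter.mpr ⟨?_, by simp [hforces]⟩, rfl⟩⟩
        exact List.mem_sublists.mpr (List.Sublist.map Prod.snd List.filter_sublist)
      have hCtrue := hall _ hmem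
      have hw := (evalA_clauseL v w S p.1 p.2).mp hCtrue ?_
      · rw [hwf] at hw; cases hw
      · intro b hb
        obtain ⟨q, hq, rfl⟩ := List.mem_map.mp hb
        have h2 := (List.mem_filter.mp hq).2
        simp only [Bool.and_eq_true, decide_eq_true_eq] at h2
        rw [← h2.1]
        exact h2.2
  · intro C hC
    rw [hCs] at hC
    obtain ⟨p, hp, hC'⟩ := List.mem_flatMap.mp hC
    obtain ⟨S, hS, rfl⟩ := List.mem_map.mp hC'
    have hf := (List.mem_filter.mp hS).2
    simp only [decide_eq_true_eq] at hf
    exact AX_clause_of_forces hf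

end CausalSim

namespace CausalSim

theorem exists_getD {l : List Br} {P : Br → Prop} :
    (∃ j, j < l.length ∧ P (l.getD j defBr)) ↔ ∃ b ∈ l, P b := by
  constructor
  · rintro ⟨j, hj, hP⟩
    rw [List.getD_eq_getElem l defBr hj] at hP
    exact ⟨l[j], List.getElem_mem hj, hP⟩
  · rintro ⟨b, hb, hP⟩
    obtain ⟨j, hj, rfl⟩ := List.mem_iff_getElem.mp hb
    exact ⟨j, hj, by rw [List.getD_eq_getElem l defBr hj]; exact hP⟩

theorem lint_eq_of_agree {N : ℕ} {α γ : Lint} (hα : α.maxAtom ≤ N) (hγ : γ.maxAtom ≤ N)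
    (h : ∀ i, i ≤ N → γ.itv i = α.itv i) : γ = α := by
  refine Lint.ext_of_itv fun i => ?_
  by_cases hi : i ≤ N
  · exact h i hi
  · have h1 : γ.itv i = none := by
      cases hv : γ.itv i with
      | none => rfl
      | some b => exact absurd (Lint.itv_key_le hv) (by omega)
    have h2 : α.itv i = none := by
      cases hv : α.itv i with
      | none => rfl
      | some b => exact absurd (Lint.itv_key_le hv) (by omega)
    rw [h1, h2]

theorem sat_of_consistent (φ : LForm) (h : ¬ AX (.neg φ)) : ∃ M : CSM, M.Sat φ := by
  classical
  obtain ⟨v, w, hev, hcoh⟩ := exists_coherent φ h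
  set N := φ.maxAtom with hN
  set x : ℕ → Bool := fun i => if i ≤ N then v i else false with hx
  set Y : Lint × PropForm → ℕ → Bool := fun p i =>
    if hp : p ∈ φ.conds ∧ w p.1 p.2 = false then
      (if i ≤ N then Classical.choose (hcoh p hp.1 hp.2) i else false)
    else false with hYdef
  have hYspec : ∀ p, ∀ hp : p ∈ φ.conds, ∀ hw : w p.1 p.2 = false,
      (∀ i b, p.1.itv i = some b → Y p i = b) ∧
      (∀ q ∈ φ.conds, q.1 = p.1 → w q.1 q.2 = true → q.2.eval (Y p) = true) ∧
      p.2.eval (Y p) = false := by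
    intro p hp hw
    obtain ⟨hy1, hy2, hy3⟩ := Classical.choose_spec (hcoh p hp hw)
    have hagree : ∀ i, i ≤ N → Y p i = Classical.choose (hcoh p hp hw) i := by
      intro i hi
      simp only [hYdef]
      rw [dif_pos ⟨hp, hw⟩, if_pos hi]
    refine ⟨?_, ?_, ?_⟩
    · intro i b hib
      have hiN : i ≤ N := le_trans (Lint.itv_key_le hib) (conds_le φ p hp).1
      rw [hagree i hiN]
      exact eval_toProp_itv hy1 hib
    · intro q hq hq1 hqw
      rw [eval_congr q.2 fun i hi => hagree i (le_trans hi (conds_le φ q hq).2)]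
      exact hy2 q hq hq1 hqw
    · rw [eval_congr p.2 fun i hi => hagree i (le_trans hi (conds_le φ p hp).2)]
      exact hy3
  set fc := φ.conds.filter (fun p => w p.1 p.2 == false) with hfc
  set bs : List Br := fc.map (fun p => ⟨p.1.itv, Y p⟩) with hbs
  have hfc_mem : ∀ p ∈ fc, p ∈ φ.conds ∧ w p.1 p.2 = false := by
    intro p hp
    have := List.mem_filter.mp hp
    exact ⟨this.1, by simpa using this.2⟩
  refine ⟨⟨machineOf N bs, x, ?_⟩, ?_⟩
  · apply Set.Finite.subset (Set.finite_Iic N)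
    intro i hi
    simp only [Set.mem_setOf_eq] at hi
    simp only [Set.mem_Iic]
    by_contra hgt
    push_neg at hgt
    simp only [hx] at hi
    rw [if_neg (by omega)] at hi
    cases hi
  · show SatGen (fun α => Outputs (machineOf N bs) α.itv x) x φ
    refine (satGen_iff _ x v w φ ?_ ?_).mpr hev
    · intro i hi
      show (if i ≤ N then v i else false) = v i
      exact if_pos (xatoms_le φ i hi)
    · intro p hp
      show (∀ y ∈ Outputs (machineOf N bs) p.1.itv x, p.2.eval y = true) ↔ w p.1 p.2 = true
      rw [outputs_machineOf]
      have hmax1 : p.1.maxAtom ≤ N := (conds_le φ p hp).1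
      have hmax2 : p.2.maxAtom ≤ N := (conds_le φ p hp).2
      have hout : ∀ t, (∃ j, j < bs.length ∧ MatchB N p.1.itv (bs.getD j defBr) ∧
          t = finalT N p.1.itv x (bs.getD j defBr)) ↔
          (∃ q ∈ fc, q.1 = p.1 ∧ t = finalT N p.1.itv x ⟨q.1.itv, Y q⟩) := by
        intro t
        refine Iff.trans
          (exists_getD (P := fun b => MatchB N p.1.itv b ∧ t = finalT N p.1.itv x b)) ?_
        constructor
        · rintro ⟨b, hb, hMb, rfl⟩
          obtain ⟨q, hq, rfl⟩ := List.mem_map.mp hb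
          have hqc := hfc_mem q hq
          have heq : q.1 = p.1 :=
            lint_eq_of_agree hmax1 (conds_le φ q hqc.1).1 hMb
          exact ⟨q, hq, heq, rfl⟩
        · rintro ⟨q, hq, hq1, rfl⟩
          refine ⟨⟨q.1.itv, Y q⟩, List.mem_map.mpr ⟨q, hq, rfl⟩, ?_, rfl⟩
          intro i _
          rw [hq1]
      have hevalT : ∀ q ∈ fc, q.1 = p.1 → ∀ β' : PropForm, β'.maxAtom ≤ N →
          β'.eval (finalT N p.1.itv x ⟨q.1.itv, Y q⟩) = β'.eval (Y q) := by
        intro q hq hq1 β' hβ'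
        apply eval_congr
        intro i hi
        have hiN : i ≤ N := le_trans hi hβ'
        obtain ⟨hqc, hqw⟩ := hfc_mem q hq
        cases hv : p.1.itv i with
        | some b =>
          have hYb := (hYspec q hqc hqw).1 i b (by rw [hq1]; exact hv)
          simp [finalT, hv, hYb]
        | none => simp [finalT, hv, hiN]
      cases hpw : w p.1 p.2 with
      | true =>
        refine iff_of_true ?_ rfl
        intro t ht
        simp only [Set.mem_setOf_eq] at ht
        obtain ⟨q, hq, hq1, rfl⟩ := (hout t).mp ht
        obtain ⟨hqc, hqw⟩ := hfc_mem q hq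
        rw [hevalT q hq hq1 p.2 hmax2]
        exact (hYspec q hqc hqw).2.1 p hp hq1.symm (by rw [hpw])
      | false =>
        refine iff_of_false ?_ (by simp)
        intro hall
        have hpfc : p ∈ fc := List.mem_filter.mpr ⟨hp, by simp [hpw]⟩
        have hmem := (hout (finalT N p.1.itv x ⟨p.1.itv, Y p⟩)).mpr ⟨p, hpfc, rfl, rfl⟩
        have hT := hall _ hmem
        rw [hevalT p hpfc rfl p.2 hmax2] at hT
        rw [(hYspec p hp hpw).2.2] at hT
        cases hT

end CausalSim

namespace CausalSim

/-- Completeness of `AX` for the class `M` of all causal simulation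
models: every `L`-formula true in every model is a theorem of `AX`; equivalently,
every `AX`-consistent formula is satisfied by some model. -/
theorem AX_complete :
    (∀ φ : LForm, (∀ M : CSM, M.Sat φ) → AX φ) ∧
    (∀ φ : LForm, ¬ AX (.neg φ) → ∃ M : CSM, M.Sat φ) := by
  refine ⟨?_, sat_of_consistent⟩
  intro φ hval
  by_contra hax
  have hdne : Tautology ((LForm.neg (.neg φ)).imp φ) := by
    intro v w
    show (!(LForm.evalA v w (.neg (.neg φ))) || φ.evalA v w) = true
    cases hφ : φ.evalA v w <;> simp [LForm.evalA, hφ]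
  have h2 : ¬ AX (LForm.neg (.neg φ)) := fun hnn => hax (Deriv.mp (Deriv.taut hdne) hnn)
  obtain ⟨M, hM⟩ := sat_of_consistent (.neg φ) h2
  exact hM (hval M)

end CausalSim
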